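/- Consider random variables X (on a finite set 𝒳), U (on finite 𝒰), X' (on 𝒳), and R (on finite ℛ) defined on a common probability space, where 𝒳 = S × 𝒰pre for finite sets S, 𝒰pre. Suppose Pr(X' = x' | X = x, U = u) = π_pre(x'.s, x'.u_pre) · ∑_{a ∈ A} P(x.s, a, x'.s) π_post(x, u, a) holds, where conditioned on (X = x, U = u) the action A is distributed as π_post(x, u, ·), the next state component X'.s given A = a is distributed as P(x.s, a, ·), independent of (x.u_pre, u) given a, and X'.u_pre given X'.s = s' is distributed as π_pre(s', ·), independent of everything else given s'. Then Pr(X'.u_pre = u'_pre | X'.s = s') = Pr(X'.u_pre = u'_pre | X'.s = s', X = x, U = u), i.e., the new pre-output is conditionally independent of the previous local state and output given the new environment state. -/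
import Mathlib


open scoped Classical in
/-- Probability of an event under a finite probability mass function. -/
noncomputable def Pr {Ω : Type*} [Fintype Ω] (p : Ω → ℝ) (E : Ω → Prop) : ℝ :=
  ∑ ω, if E ω then p ω else 0

/-- Conditional probability `Pr(E | F)` under a finite pmf. -/
noncomputable def CondPr {Ω : Type*} [Fintype Ω] (p : Ω → ℝ) (E F : Ω → Prop) : ℝ :=
  Pr p (fun ω => E ω ∧ F ω) / Pr p F

open scoped Classical

lemma Pr_nonneg {Ω : Type*} [Fintype Ω] (p : Ω → ℝ) (hp : ∀ ω, 0 ≤ p ω)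
    (E : Ω → Prop) : 0 ≤ Pr p E := by
  apply Finset.sum_nonneg
  intro ω _
  split <;> simp [hp ω]

lemma Pr_congr {Ω : Type*} [Fintype Ω] (p : Ω → ℝ) {E F : Ω → Prop}
    (h : ∀ ω, E ω ↔ F ω) : Pr p E = Pr p F := by
  unfold Pr
  apply Finset.sum_congr rfl
  intro ω _
  simp [h ω]

lemma Pr_mono {Ω : Type*} [Fintype Ω] (p : Ω → ℝ) (hp : ∀ ω, 0 ≤ p ω)
    {E F : Ω → Prop} (h : ∀ ω, E ω → F ω) : Pr p E ≤ Pr p F := by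
  apply Finset.sum_le_sum
  intro ω _
  by_cases hE : E ω
  · simp [hE, h ω hE]
  · simp only [hE, if_false]
    split <;> simp [hp ω]

lemma Pr_fiber_sum {Ω V : Type*} [Fintype Ω] [Fintype V] (p : Ω → ℝ)
    (f : Ω → V) (E : Ω → Prop) :
    Pr p E = ∑ v, Pr p (fun ω => E ω ∧ f ω = v) := by
  unfold Pr
  rw [Finset.sum_comm]
  apply Finset.sum_congr rfl
  intro ω _
  by_cases hE : E ω
  · simp [hE]
  · simp [hE]

theorem stmt_3 {Ω S A Upre U : Type*} [Fintype Ω] [Fintype S] [Fintype A]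
    [Fintype Upre] [Fintype U]
    (p : Ω → ℝ) (hp : ∀ ω, 0 ≤ p ω) (hpsum : ∑ ω, p ω = 1)
    (X : Ω → S × Upre) (Uv : Ω → U) (X' : Ω → S × Upre)
    (πpre : S → Upre → ℝ) (hpre0 : ∀ s u, 0 ≤ πpre s u)
    (hpre1 : ∀ s, ∑ u, πpre s u = 1)
    (P : S → A → S → ℝ) (hP0 : ∀ s a s', 0 ≤ P s a s')
    (hP1 : ∀ s a, ∑ s', P s a s' = 1)
    (πpost : (S × Upre) → U → A → ℝ) (hpost0 : ∀ x u a, 0 ≤ πpost x u a)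
    (hpost1 : ∀ x u, ∑ a, πpost x u a = 1)
    (hker : ∀ (x : S × Upre) (u : U) (x' : S × Upre),
      0 < Pr p (fun ω => X ω = x ∧ Uv ω = u) →
      CondPr p (fun ω => X' ω = x') (fun ω => X ω = x ∧ Uv ω = u)
        = πpre x'.1 x'.2 * ∑ a, P x.1 a x'.1 * πpost x u a) :
    ∀ (s' : S) (u' : Upre) (x : S × Upre) (u : U),
      0 < Pr p (fun ω => (X' ω).1 = s') →
      0 < Pr p (fun ω => (X' ω).1 = s' ∧ X ω = x ∧ Uv ω = u) →
      CondPr p (fun ω => (X' ω).2 = u') (fun ω => (X' ω).1 = s')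
        = CondPr p (fun ω => (X' ω).2 = u')
            (fun ω => (X' ω).1 = s' ∧ X ω = x ∧ Uv ω = u) := by
  intro s' u' x u hs' hjoint
  -- joint formula valid for all (x, u, x')
  have key : ∀ (y : S × Upre) (v : U) (x' : S × Upre),
      Pr p (fun ω => X' ω = x' ∧ X ω = y ∧ Uv ω = v)
        = πpre x'.1 x'.2 * ((∑ a, P y.1 a x'.1 * πpost y v a)
            * Pr p (fun ω => X ω = y ∧ Uv ω = v)) := by
    intro y v x'
    by_cases hpos : 0 < Pr p (fun ω => X ω = y ∧ Uv ω = v)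
    · have h := hker y v x' hpos
      unfold CondPr at h
      have := (div_eq_iff (ne_of_gt hpos)).mp h
      rw [this]; ring
    · have h0 : Pr p (fun ω => X ω = y ∧ Uv ω = v) = 0 :=
        le_antisymm (not_lt.mp hpos) (Pr_nonneg p hp _)
      have h1 : Pr p (fun ω => X' ω = x' ∧ X ω = y ∧ Uv ω = v) = 0 := by
        refine le_antisymm ?_ (Pr_nonneg p hp _)
        calc Pr p (fun ω => X' ω = x' ∧ X ω = y ∧ Uv ω = v)
            ≤ Pr p (fun ω => X ω = y ∧ Uv ω = v) :=
              Pr_mono p hp (fun ω h => h.2)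
          _ = 0 := h0
      rw [h1, h0]; ring
  -- abbreviation
  set K : S × Upre → U → ℝ := fun y v =>
    (∑ a, P y.1 a s' * πpost y v a) * Pr p (fun ω => X ω = y ∧ Uv ω = v) with hK
  -- Pr((X').1 = s' ∧ X = y ∧ Uv = v) = K y v
  have hmarg : ∀ (y : S × Upre) (v : U),
      Pr p (fun ω => (X' ω).1 = s' ∧ X ω = y ∧ Uv ω = v) = K y v := by
    intro y v
    have := Pr_fiber_sum p (fun ω => (X' ω).2)
      (fun ω => (X' ω).1 = s' ∧ X ω = y ∧ Uv ω = v)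
    rw [this]
    have : ∀ u'' : Upre,
        Pr p (fun ω => ((X' ω).1 = s' ∧ X ω = y ∧ Uv ω = v) ∧ (X' ω).2 = u'')
          = πpre s' u'' * K y v := by
      intro u''
      rw [Pr_congr p (F := fun ω => X' ω = (s', u'') ∧ X ω = y ∧ Uv ω = v)
        (by intro ω; constructor
            · rintro ⟨⟨h1, h2⟩, h3⟩; exact ⟨Prod.ext h1 h3, h2⟩
            · rintro ⟨h1, h2⟩; rw [h1]; exact ⟨⟨rfl, h2⟩, rfl⟩)]
      rw [key y v (s', u'')]
    simp_rw [this, ← Finset.sum_mul, hpre1 s', one_mul]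
  -- top events
  have htop : ∀ (y : S × Upre) (v : U),
      Pr p (fun ω => (X' ω).2 = u' ∧ (X' ω).1 = s' ∧ X ω = y ∧ Uv ω = v)
        = πpre s' u' * K y v := by
    intro y v
    rw [Pr_congr p (F := fun ω => X' ω = (s', u') ∧ X ω = y ∧ Uv ω = v)
      (by intro ω; constructor
          · rintro ⟨h1, h2, h3⟩; exact ⟨Prod.ext h2 h1, h3⟩
          · rintro ⟨h1, h2⟩; rw [h1]; exact ⟨rfl, rfl, h2⟩)]
    exact key y v (s', u')
  -- RHS value
  have hKpos : 0 < K x u := by rw [← hmarg x u]; exact hjoint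
  have hRHS : CondPr p (fun ω => (X' ω).2 = u')
      (fun ω => (X' ω).1 = s' ∧ X ω = x ∧ Uv ω = u) = πpre s' u' := by
    unfold CondPr
    rw [Pr_congr p (F := fun ω => (X' ω).2 = u' ∧ (X' ω).1 = s' ∧ X ω = x ∧ Uv ω = u)
      (by intro ω; tauto), htop x u, hmarg x u]
    field_simp
  -- LHS: partition over (y, v)
  have hLtop : Pr p (fun ω => (X' ω).2 = u' ∧ (X' ω).1 = s')
      = πpre s' u' * ∑ yv : (S × Upre) × U, K yv.1 yv.2 := by
    rw [Pr_fiber_sum p (fun ω => (X ω, Uv ω))]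
    rw [Finset.mul_sum]
    apply Finset.sum_congr rfl
    intro yv _
    rw [Pr_congr p (F := fun ω => (X' ω).2 = u' ∧ (X' ω).1 = s' ∧ X ω = yv.1 ∧ Uv ω = yv.2)
      (by intro ω; constructor
          · rintro ⟨⟨h1, h2⟩, h3⟩
            exact ⟨h1, h2, congrArg Prod.fst h3, congrArg Prod.snd h3⟩
          · rintro ⟨h1, h2, h3, h4⟩; exact ⟨⟨h1, h2⟩, Prod.ext h3 h4⟩)]
    exact htop yv.1 yv.2
  have hLbot : Pr p (fun ω => (X' ω).1 = s')
      = ∑ yv : (S × Upre) × U, K yv.1 yv.2 := by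
    rw [Pr_fiber_sum p (fun ω => (X ω, Uv ω))]
    apply Finset.sum_congr rfl
    intro yv _
    rw [Pr_congr p (F := fun ω => (X' ω).1 = s' ∧ X ω = yv.1 ∧ Uv ω = yv.2)
      (by intro ω; constructor
          · rintro ⟨h1, h2⟩
            exact ⟨h1, congrArg Prod.fst h2, congrArg Prod.snd h2⟩
          · rintro ⟨h1, h2, h3⟩; exact ⟨h1, Prod.ext h2 h3⟩)]
    exact hmarg yv.1 yv.2
  have hsumpos : 0 < ∑ yv : (S × Upre) × U, K yv.1 yv.2 := by
    rw [← hLbot]; exact hs'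
  have hLHS : CondPr p (fun ω => (X' ω).2 = u') (fun ω => (X' ω).1 = s')
      = πpre s' u' := by
    unfold CondPr
    rw [hLtop, hLbot]
    field_simp
  rw [hLHS, hRHS]
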